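/- arXiv:2504.11302 — 2 statements merged into one kernel-verified Lean document; each statement's English description precedes it below -/
import Mathlib

section
/- Let {x_n} ⊂ ℝ^d generate P_n = {x_1,...,x_n} with normalized counting measures ν_n = (1/n) Σ_{a ∈ P_n} δ_a. Suppose {P_n} is s-adaptable (i.e., for every t < s, sup_n J_t(P_n) < ∞) and ν_n converges weak-star to some probability measure μ. Then the Hausdorff dimension of the support of μ is at least s. -/
open MeasureTheory Finset Filter ENNReal Metric

namespace AdaptAux

variable {X : Type*} [MetricSpace X]

/-- truncated Riesz kernel -/
noncomputable def F (t δ : ℝ) (p q : X) : ℝ := (max (dist p q) δ) ^ (-t)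

/-- cutoff function -/
noncomputable def chi (x0 : X) (R : ℝ) (p : X) : ℝ := max 0 (min 1 (R + 1 - dist p x0))

variable {t δ : ℝ}

lemma F_pos (ht : 0 < t) (hδ : 0 < δ) (p q : X) : 0 < F t δ p q :=
  Real.rpow_pos_of_pos (lt_max_of_lt_right hδ) _

lemma F_le (ht : 0 < t) (hδ : 0 < δ) (p q : X) : F t δ p q ≤ δ ^ (-t) :=
  Real.rpow_le_rpow_of_nonpos hδ (le_max_right _ _) (neg_nonpos.2 ht.le)

lemma F_le_rpow (ht : 0 < t) (hδ : 0 < δ) {p q : X} (h : 0 < dist p q) :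
    F t δ p q ≤ dist p q ^ (-t) :=
  Real.rpow_le_rpow_of_nonpos h (le_max_left _ _) (neg_nonpos.2 ht.le)

lemma F_symm (p q : X) : F t δ p q = F t δ q p := by rw [F, F, dist_comm]

lemma rpow_lip (ht : 0 < t) (hδ : 0 < δ) {a b : ℝ} (ha : δ ≤ a) (hb : δ ≤ b) :
    |a ^ (-t) - b ^ (-t)| ≤ t * δ ^ (-t - 1) * |a - b| := by
  have key : ∀ y ∈ Set.Ici δ, HasDerivWithinAt (fun r : ℝ => r ^ (-t))
      (-t * y ^ (-t - 1)) (Set.Ici δ) y := by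
    intro y hy
    exact (Real.hasDerivAt_rpow_const (Or.inl (hδ.trans_le hy).ne')).hasDerivWithinAt
  have bound : ∀ y ∈ Set.Ici δ, ‖-t * y ^ (-t - 1)‖ ≤ t * δ ^ (-t - 1) := by
    intro y hy
    rw [norm_mul, norm_neg, Real.norm_eq_abs, Real.norm_eq_abs,
      abs_of_pos ht, abs_of_pos (Real.rpow_pos_of_pos (hδ.trans_le hy) _)]
    exact mul_le_mul_of_nonneg_left
      (Real.rpow_le_rpow_of_nonpos hδ hy (by linarith)) ht.le
  have := (convex_Ici δ).norm_image_sub_le_of_norm_hasDerivWithin_le key bound hb ha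
  simpa [Real.norm_eq_abs] using this

lemma F_lip (ht : 0 < t) (hδ : 0 < δ) (p p' q : X) :
    |F t δ p q - F t δ p' q| ≤ t * δ ^ (-t - 1) * dist p p' := by
  have h1 : |max (dist p q) δ - max (dist p' q) δ| ≤ dist p p' := by
    have := abs_dist_sub_le p p' q
    have h2 := abs_max_sub_max_le_abs (dist p q) (dist p' q) δ
    calc |max (dist p q) δ - max (dist p' q) δ| ≤ |dist p q - dist p' q| := h2
      _ ≤ dist p p' := abs_dist_sub_le p p' q
  calc |F t δ p q - F t δ p' q| ≤ t * δ ^ (-t - 1) * |max (dist p q) δ - max (dist p' q) δ| :=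
        rpow_lip ht hδ (le_max_right _ _) (le_max_right _ _)
    _ ≤ t * δ ^ (-t - 1) * dist p p' := by
        apply mul_le_mul_of_nonneg_left h1
        positivity

lemma F_continuous (ht : 0 < t) (hδ : 0 < δ) :
    Continuous (fun pq : X × X => F t δ pq.1 pq.2) := by
  apply Continuous.rpow_const
  · exact (continuous_dist.comp (continuous_fst.prodMk continuous_snd)).max continuous_const
  · intro pq
    exact Or.inl (lt_max_of_lt_right hδ).ne'

lemma chi_nonneg (x0 : X) (R : ℝ) (p : X) : 0 ≤ chi x0 R p := le_max_left _ _

lemma chi_le_one (x0 : X) (R : ℝ) (p : X) : chi x0 R p ≤ 1 :=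
  max_le zero_le_one (min_le_left _ _)

lemma chi_lip (x0 : X) (R : ℝ) (p p' : X) : |chi x0 R p - chi x0 R p'| ≤ dist p p' := by
  have h1 : |(R + 1 - dist p x0) - (R + 1 - dist p' x0)| ≤ dist p p' := by
    rw [show (R + 1 - dist p x0) - (R + 1 - dist p' x0) = -(dist p x0 - dist p' x0) by ring,
      abs_neg]
    exact abs_dist_sub_le p p' x0
  have h2 : |min 1 (R + 1 - dist p x0) - min 1 (R + 1 - dist p' x0)| ≤ dist p p' := by
    refine le_trans (abs_min_sub_min_le_max _ _ _ _) (max_le (by simpa using dist_nonneg) h1)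
  calc |chi x0 R p - chi x0 R p'|
      = |max (min 1 (R + 1 - dist p x0)) 0 - max (min 1 (R + 1 - dist p' x0)) 0| := by
        rw [chi, chi, max_comm, max_comm (0:ℝ)]
    _ ≤ |min 1 (R + 1 - dist p x0) - min 1 (R + 1 - dist p' x0)| := abs_max_sub_max_le_abs _ _ _
    _ ≤ dist p p' := h2

lemma chi_continuous (x0 : X) (R : ℝ) : Continuous (chi x0 R) :=
  continuous_const.max (continuous_const.min (continuous_const.sub (continuous_dist.comp
    (continuous_id.prodMk continuous_const))))

lemma chi_eq_zero (x0 : X) {R : ℝ} {p : X} (h : R + 1 ≤ dist p x0) : chi x0 R p = 0 := by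
  rw [chi, max_eq_left]
  exact min_le_of_right_le (by linarith)

lemma chi_eq_one (x0 : X) {R : ℝ} {p : X} (h : dist p x0 ≤ R) : chi x0 R p = 1 := by
  rw [chi, min_eq_left (by linarith), max_eq_right zero_le_one]

lemma chi_mono (x0 : X) {R R' : ℝ} (h : R ≤ R') (p : X) : chi x0 R p ≤ chi x0 R' p := by
  apply max_le_max le_rfl
  apply min_le_min le_rfl
  linarith

section MeasureSide

variable [MeasurableSpace X] [BorelSpace X] [ProperSpace X]

lemma integral_nu (x : ℕ → X) (n : ℕ) (f : X → ℝ) (hf : Continuous f)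
    (hcs : HasCompactSupport f) :
    ∫ p, f p ∂((n : ℝ≥0∞)⁻¹ • ∑ i ∈ Finset.range n, Measure.dirac (x i))
      = (n : ℝ)⁻¹ * ∑ i ∈ Finset.range n, f (x i) := by
  rw [integral_smul_measure,
    integral_finset_sum_measure (fun i _ => hf.integrable_of_hasCompactSupport hcs)]
  simp only [integral_dirac' _ _ hf.stronglyMeasurable]
  rw [smul_eq_mul, ENNReal.toReal_inv]; simp

lemma nu_univ_le (x : ℕ → X) (n : ℕ) :
    ((n : ℝ≥0∞)⁻¹ • ∑ i ∈ Finset.range n, Measure.dirac (x i)) Set.univ ≤ 1 := by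
  simp only [Measure.smul_apply, Measure.finset_sum_apply,
    Measure.dirac_apply' _ MeasurableSet.univ]
  simp only [Set.indicator_univ, Pi.one_apply, Finset.sum_const, Finset.card_range, nsmul_eq_mul,
    mul_one, smul_eq_mul]
  rcases Nat.eq_zero_or_pos n with h | h
  · simp [h]
  · rw [ENNReal.inv_mul_cancel (by exact_mod_cast h.ne') (by simp)]

instance nu_finite (x : ℕ → X) (n : ℕ) :
    IsFiniteMeasure ((n : ℝ≥0∞)⁻¹ • ∑ i ∈ Finset.range n, Measure.dirac (x i)) :=
  ⟨lt_of_le_of_lt (nu_univ_le x n) one_lt_top⟩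

/-- the regularized potential -/
noncomputable def g (t δ R : ℝ) (x0 : X) (ν : Measure X) (p : X) : ℝ :=
  chi x0 R p * ∫ q, chi x0 R q * F t δ p q ∂ν

variable {R : ℝ} {x0 : X}

lemma integrand_cont (ht : 0 < t) (hδ : 0 < δ) (p : X) :
    Continuous (fun q => chi x0 R q * F t δ p q) :=
  (chi_continuous x0 R).mul ((F_continuous ht hδ).comp (Continuous.prodMk_right p))

lemma integrand_hcs (p : X) : HasCompactSupport (fun q => chi x0 R q * F t δ p q) := by
  apply HasCompactSupport.intro (isCompact_closedBall x0 (R + 1))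
  intro q hq
  rw [chi_eq_zero x0 (le_of_lt (by simpa [dist_comm] using hq)), zero_mul]

lemma integrand_bound (ht : 0 < t) (hδ : 0 < δ) (p q : X) :
    |chi x0 R q * F t δ p q| ≤ δ ^ (-t) := by
  rw [abs_mul, abs_of_nonneg (chi_nonneg x0 R q), abs_of_nonneg (F_pos ht hδ p q).le]
  calc chi x0 R q * F t δ p q ≤ 1 * (δ ^ (-t)) :=
    mul_le_mul (chi_le_one x0 R q) (F_le ht hδ p q) (F_pos ht hδ p q).le zero_le_one
  _ = δ ^ (-t) := one_mul _

lemma integral_bound (ht : 0 < t) (hδ : 0 < δ) (ν : Measure X) [IsFiniteMeasure ν]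
    (hν : (ν Set.univ).toReal ≤ 1) (f : X → ℝ) (hf : ∀ q, |f q| ≤ δ ^ (-t)) :
    |∫ q, f q ∂ν| ≤ δ ^ (-t) := by
  have h := norm_integral_le_of_norm_le_const (μ := ν) (f := f) (C := δ ^ (-t))
    (Eventually.of_forall (fun q => by rw [Real.norm_eq_abs]; exact hf q))
  rw [Real.norm_eq_abs] at h
  calc |∫ q, f q ∂ν| ≤ δ ^ (-t) * (ν Set.univ).toReal := h
    _ ≤ δ ^ (-t) * 1 := by
        apply mul_le_mul_of_nonneg_left hν (Real.rpow_nonneg hδ.le _)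
    _ = δ ^ (-t) := mul_one _

lemma g_bound (ht : 0 < t) (hδ : 0 < δ) (ν : Measure X) [IsFiniteMeasure ν]
    (hν : (ν Set.univ).toReal ≤ 1) (p : X) : |g t δ R x0 ν p| ≤ δ ^ (-t) := by
  rw [g, abs_mul]
  calc |chi x0 R p| * |∫ q, chi x0 R q * F t δ p q ∂ν| ≤ 1 * (δ ^ (-t)) := by
        apply mul_le_mul _ (integral_bound ht hδ ν hν _ (integrand_bound ht hδ p)) (abs_nonneg _)
          zero_le_one
        rw [abs_of_nonneg (chi_nonneg x0 R p)]; exact chi_le_one x0 R p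
    _ = δ ^ (-t) := one_mul _

lemma g_lip (ht : 0 < t) (hδ : 0 < δ) (ν : Measure X) [IsFiniteMeasure ν]
    (hν : (ν Set.univ).toReal ≤ 1) (p p' : X) :
    |g t δ R x0 ν p - g t δ R x0 ν p'| ≤ (δ ^ (-t) + t * δ ^ (-t - 1)) * dist p p' := by
  set I := ∫ q, chi x0 R q * F t δ p q ∂ν with hI
  set I' := ∫ q, chi x0 R q * F t δ p' q ∂ν with hI'
  have key : g t δ R x0 ν p - g t δ R x0 ν p'
      = (chi x0 R p - chi x0 R p') * I + chi x0 R p' * (I - I') := by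
    rw [g, g]; ring
  have hII' : |I - I'| ≤ t * δ ^ (-t - 1) * dist p p' := by
    rw [hI, hI', ← integral_sub
      ((integrand_cont ht hδ p).integrable_of_hasCompactSupport (integrand_hcs p))
      ((integrand_cont ht hδ p').integrable_of_hasCompactSupport (integrand_hcs p'))]
    have hb : ∀ q, |chi x0 R q * F t δ p q - chi x0 R q * F t δ p' q|
        ≤ t * δ ^ (-t - 1) * dist p p' := by
      intro q
      rw [← mul_sub, abs_mul, abs_of_nonneg (chi_nonneg x0 R q)]
      calc chi x0 R q * |F t δ p q - F t δ p' q| ≤ 1 * |F t δ p q - F t δ p' q| :=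
            mul_le_mul_of_nonneg_right (chi_le_one x0 R q) (abs_nonneg _)
        _ ≤ t * δ ^ (-t - 1) * dist p p' := by rw [one_mul]; exact F_lip ht hδ p p' q
    have h := norm_integral_le_of_norm_le_const (μ := ν)
      (f := fun q => chi x0 R q * F t δ p q - chi x0 R q * F t δ p' q)
      (C := t * δ ^ (-t - 1) * dist p p')
      (Eventually.of_forall (fun q => by rw [Real.norm_eq_abs]; exact hb q))
    rw [Real.norm_eq_abs] at h
    calc |∫ q, (chi x0 R q * F t δ p q - chi x0 R q * F t δ p' q) ∂ν|
        ≤ t * δ ^ (-t - 1) * dist p p' * (ν Set.univ).toReal := h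
      _ ≤ t * δ ^ (-t - 1) * dist p p' * 1 := by
          apply mul_le_mul_of_nonneg_left hν; positivity
      _ = t * δ ^ (-t - 1) * dist p p' := mul_one _
  calc |g t δ R x0 ν p - g t δ R x0 ν p'|
      ≤ |(chi x0 R p - chi x0 R p') * I| + |chi x0 R p' * (I - I')| := by
        rw [key]; exact abs_add_le _ _
    _ ≤ dist p p' * δ ^ (-t) + 1 * (t * δ ^ (-t - 1) * dist p p') := by
        apply add_le_add
        · rw [abs_mul]
          exact mul_le_mul (chi_lip x0 R p p')
            (integral_bound ht hδ ν hν _ (integrand_bound ht hδ p)) (abs_nonneg _) dist_nonneg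
        · rw [abs_mul]
          exact mul_le_mul (by rw [abs_of_nonneg (chi_nonneg x0 R p')]; exact chi_le_one x0 R p')
            hII' (abs_nonneg _) zero_le_one
    _ = (δ ^ (-t) + t * δ ^ (-t - 1)) * dist p p' := by ring

lemma g_zero (ν : Measure X) {p : X} (h : R + 1 ≤ dist p x0) : g t δ R x0 ν p = 0 := by
  rw [g, chi_eq_zero x0 h, zero_mul]

lemma g_cont (ht : 0 < t) (hδ : 0 < δ) (ν : Measure X) [IsFiniteMeasure ν]
    (hν : (ν Set.univ).toReal ≤ 1) : Continuous (g t δ R x0 ν) := by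
  rw [Metric.continuous_iff]
  intro p ε hε
  refine ⟨ε / (δ ^ (-t) + t * δ ^ (-t - 1) + 1), by positivity, fun p' hp' => ?_⟩
  rw [Real.dist_eq]
  calc |g t δ R x0 ν p' - g t δ R x0 ν p| ≤ (δ ^ (-t) + t * δ ^ (-t - 1)) * dist p' p :=
        g_lip ht hδ ν hν p' p
    _ < ε := by
        have h1 : (0:ℝ) < δ ^ (-t) + t * δ ^ (-t - 1) + 1 := by positivity
        have h2 : (0:ℝ) ≤ δ ^ (-t) + t * δ ^ (-t - 1) := by positivity
        nlinarith [dist_nonneg (x := p') (y := p), mul_lt_mul_of_pos_left hp' h1,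
          mul_div_cancel₀ ε h1.ne']

lemma g_hcs (ν : Measure X) : HasCompactSupport (g t δ R x0 ν) := by
  apply HasCompactSupport.intro (isCompact_closedBall x0 (R + 1))
  intro q hq
  exact g_zero ν (le_of_lt (by simpa [dist_comm] using hq))

end MeasureSide

section Core

variable [MeasurableSpace X] [BorelSpace X] [ProperSpace X]
variable {R : ℝ} {x0 : X} (x : ℕ → X) (μ : Measure X) [IsProbabilityMeasure μ]

lemma g_pointwise (ht : 0 < t) (hδ : 0 < δ)
    (hweak : ∀ f : X → ℝ, Continuous f → (∃ C, ∀ p, |f p| ≤ C) →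
      Tendsto (fun n : ℕ =>
          ∫ p, f p ∂((n : ℝ≥0∞)⁻¹ • ∑ i ∈ Finset.range n, Measure.dirac (x i)))
        atTop (nhds (∫ p, f p ∂μ)))
    (p : X) :
    Tendsto (fun n : ℕ =>
      g t δ R x0 ((n : ℝ≥0∞)⁻¹ • ∑ i ∈ Finset.range n, Measure.dirac (x i)) p)
      atTop (nhds (g t δ R x0 μ p)) := by
  unfold g
  exact (hweak _ (integrand_cont ht hδ p)
    ⟨δ ^ (-t), integrand_bound ht hδ p⟩).const_mul _

lemma g_unif (ht : 0 < t) (hδ : 0 < δ)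
    (hweak : ∀ f : X → ℝ, Continuous f → (∃ C, ∀ p, |f p| ≤ C) →
      Tendsto (fun n : ℕ =>
          ∫ p, f p ∂((n : ℝ≥0∞)⁻¹ • ∑ i ∈ Finset.range n, Measure.dirac (x i)))
        atTop (nhds (∫ p, f p ∂μ)))
    {ε : ℝ} (hε : 0 < ε) :
    ∀ᶠ n : ℕ in atTop, ∀ p : X,
      |g t δ R x0 ((n : ℝ≥0∞)⁻¹ • ∑ i ∈ Finset.range n, Measure.dirac (x i)) p
        - g t δ R x0 μ p| ≤ ε := by
  set K := δ ^ (-t) + t * δ ^ (-t - 1) with hK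
  have hK0 : 0 ≤ K := by rw [hK]; positivity
  set ε₀ := ε / (4 * K + 1) with hε₀
  have hε₀pos : 0 < ε₀ := by rw [hε₀]; positivity
  obtain ⟨T, hTfin, hTcov⟩ := Metric.totallyBounded_iff.mp
    (isCompact_closedBall x0 (R + 1)).totallyBounded ε₀ hε₀pos
  have hptw : ∀ y ∈ T, ∀ᶠ n : ℕ in atTop,
      |g t δ R x0 ((n : ℝ≥0∞)⁻¹ • ∑ i ∈ Finset.range n, Measure.dirac (x i)) y
        - g t δ R x0 μ y| ≤ ε / 2 := by
    intro y _
    have := g_pointwise (R := R) (x0 := x0) x μ ht hδ hweak y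
    rw [Metric.tendsto_atTop] at this
    obtain ⟨N, hN⟩ := this (ε / 2) (by positivity)
    exact eventually_atTop.2 ⟨N, fun n hn => by
      have := hN n hn; rw [Real.dist_eq] at this; exact this.le⟩
  filter_upwards [(eventually_all_finite hTfin).2 hptw] with n hn p
  set νn := ((n : ℝ≥0∞)⁻¹ • ∑ i ∈ Finset.range n, Measure.dirac (x i)) with hνn
  have hνn1 : (νn Set.univ).toReal ≤ 1 := by
    have h := ENNReal.toReal_mono (by simp) (nu_univ_le x n)
    rwa [ENNReal.toReal_one] at h
  by_cases hp : dist p x0 ≤ R + 1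
  · obtain ⟨y, hyT, hy⟩ := Set.mem_iUnion₂.mp (hTcov (Metric.mem_closedBall.mpr hp))
    rw [Metric.mem_ball] at hy
    have h1 : |g t δ R x0 νn p - g t δ R x0 νn y| ≤ K * ε₀ :=
      le_trans (g_lip ht hδ νn hνn1 p y) (mul_le_mul_of_nonneg_left hy.le hK0)
    have h2 : |g t δ R x0 μ y - g t δ R x0 μ p| ≤ K * ε₀ := by
      refine le_trans (g_lip ht hδ μ (by simp) y p) ?_
      rw [dist_comm]
      exact mul_le_mul_of_nonneg_left hy.le hK0
    have h3 := hn y hyT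
    have key : g t δ R x0 νn p - g t δ R x0 μ p
        = (g t δ R x0 νn p - g t δ R x0 νn y) + (g t δ R x0 νn y - g t δ R x0 μ y)
          + (g t δ R x0 μ y - g t δ R x0 μ p) := by ring
    have h2Kε : 2 * (K * ε₀) ≤ ε / 2 := by
      rw [hε₀]
      nlinarith [div_mul_cancel₀ ε (show (4 * K + 1) ≠ 0 by positivity),
        mul_nonneg hK0 hε₀pos.le, hε₀pos.le, div_nonneg hε.le (show (0:ℝ) ≤ 4 * K + 1 by positivity)]
    calc |g t δ R x0 νn p - g t δ R x0 μ p|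
        ≤ |g t δ R x0 νn p - g t δ R x0 νn y| + |g t δ R x0 νn y - g t δ R x0 μ y|
          + |g t δ R x0 μ y - g t δ R x0 μ p| := by
          rw [key]; exact le_trans (abs_add_le _ _) (add_le_add_left (abs_add_le _ _) _)
      _ ≤ K * ε₀ + ε / 2 + K * ε₀ := add_le_add (add_le_add h1 h3) h2
      _ ≤ ε := by nlinarith [h2Kε, div_nonneg hε.le (show (0:ℝ) ≤ 2 by norm_num)]
  · push_neg at hp
    rw [g_zero νn hp.le, g_zero μ hp.le, sub_zero, abs_zero]
    exact hε.le


lemma core_bound (ht : 0 < t) (hδ : 0 < δ)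
    (hweak : ∀ f : X → ℝ, Continuous f → (∃ C, ∀ p, |f p| ≤ C) →
      Tendsto (fun n : ℕ =>
          ∫ p, f p ∂((n : ℝ≥0∞)⁻¹ • ∑ i ∈ Finset.range n, Measure.dirac (x i)))
        atTop (nhds (∫ p, f p ∂μ)))
    {c : ℝ} (hc : 0 ≤ c)
    (hsum : ∀ n : ℕ, 2 ≤ n → ∑ i ∈ Finset.range n, ∑ j ∈ (Finset.range n).erase i,
      F t δ (x i) (x j) ≤ (n : ℝ) ^ 2 * c) :
    ∫ p, g t δ R x0 μ p ∂μ ≤ c := by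
  have hμ1 : ((μ : Measure X) Set.univ).toReal ≤ 1 := by simp
  have hgc := g_cont (R := R) (x0 := x0) ht hδ μ hμ1
  have hghcs := g_hcs (t := t) (δ := δ) (R := R) (x0 := x0) μ
  have hw := hweak _ hgc ⟨δ ^ (-t), g_bound ht hδ μ hμ1⟩
  have key : ∀ ε : ℝ, 0 < ε → ∫ p, g t δ R x0 μ p ∂μ ≤ c + ε := by
    intro ε hε
    obtain ⟨N₀, hN₀⟩ := exists_nat_ge (3 * δ ^ (-t) / ε)
    have hev : ∀ᶠ n : ℕ in atTop,
        ∫ p, g t δ R x0 μ p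
          ∂((n : ℝ≥0∞)⁻¹ • ∑ i ∈ Finset.range n, Measure.dirac (x i)) ≤ c + ε := by
      filter_upwards [g_unif (R := R) (x0 := x0) x μ ht hδ hweak
        (show (0:ℝ) < ε / 3 by positivity), eventually_ge_atTop 2,
        eventually_ge_atTop N₀] with n hun hn2 hnN
      set νn := ((n : ℝ≥0∞)⁻¹ • ∑ i ∈ Finset.range n, Measure.dirac (x i)) with hνn
      have hνn1 : (νn Set.univ).toReal ≤ 1 := by
        have h := ENNReal.toReal_mono (by simp) (nu_univ_le x n)
        rwa [ENNReal.toReal_one] at h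
      have hn0 : (0:ℝ) < (n:ℝ) := by
        have : (2:ℝ) ≤ (n:ℝ) := by exact_mod_cast hn2
        linarith
      rw [show ∫ p, g t δ R x0 μ p ∂νn
          = (n : ℝ)⁻¹ * ∑ i ∈ Finset.range n, g t δ R x0 μ (x i) from
        integral_nu x n _ hgc hghcs]
      have hterm : ∀ i ∈ Finset.range n,
          g t δ R x0 μ (x i) ≤ g t δ R x0 νn (x i) + ε / 3 := by
        intro i _
        have h := hun (x i)
        have h' := (abs_le.mp h).1
        linarith
      have hinner : ∀ i ∈ Finset.range n, g t δ R x0 νn (x i)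
          ≤ (n:ℝ)⁻¹ * (δ ^ (-t) + ∑ j ∈ (Finset.range n).erase i, F t δ (x i) (x j)) := by
        intro i hi
        rw [g, show ∫ q, chi x0 R q * F t δ (x i) q ∂νn
            = (n : ℝ)⁻¹ * ∑ j ∈ Finset.range n, chi x0 R (x j) * F t δ (x i) (x j) from
          integral_nu x n _ (integrand_cont ht hδ _) (integrand_hcs _)]
        have hsum_nonneg : (0:ℝ) ≤ ∑ j ∈ Finset.range n, chi x0 R (x j) * F t δ (x i) (x j) :=
          Finset.sum_nonneg fun j _ =>
            mul_nonneg (chi_nonneg x0 R (x j)) (F_pos ht hδ _ _).le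
        have h1 : ∑ j ∈ Finset.range n, chi x0 R (x j) * F t δ (x i) (x j)
            ≤ δ ^ (-t) + ∑ j ∈ (Finset.range n).erase i, F t δ (x i) (x j) := by
          rw [← Finset.add_sum_erase _ _ hi]
          refine add_le_add ?_ (Finset.sum_le_sum fun j _ =>
            mul_le_of_le_one_left (F_pos ht hδ _ _).le (chi_le_one x0 R (x j)))
          exact le_trans (mul_le_of_le_one_left (F_pos ht hδ _ _).le (chi_le_one x0 R (x i)))
            (F_le ht hδ _ _)
        calc chi x0 R (x i) * ((n : ℝ)⁻¹ * ∑ j ∈ Finset.range n,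
              chi x0 R (x j) * F t δ (x i) (x j))
            ≤ 1 * ((n : ℝ)⁻¹ * ∑ j ∈ Finset.range n, chi x0 R (x j) * F t δ (x i) (x j)) :=
              mul_le_mul_of_nonneg_right (chi_le_one x0 R (x i))
                (by positivity)
          _ = (n : ℝ)⁻¹ * ∑ j ∈ Finset.range n, chi x0 R (x j) * F t δ (x i) (x j) := one_mul _
          _ ≤ (n:ℝ)⁻¹ * (δ ^ (-t) + ∑ j ∈ (Finset.range n).erase i, F t δ (x i) (x j)) :=
              mul_le_mul_of_nonneg_left h1 (by positivity)
      have hδn : δ ^ (-t) / (n:ℝ) ≤ ε / 3 := by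
        rw [div_le_iff₀ hn0]
        have h1 : 3 * δ ^ (-t) / ε ≤ (n:ℝ) := le_trans hN₀ (by exact_mod_cast hnN)
        rw [div_le_iff₀ hε] at h1
        nlinarith
      calc (n : ℝ)⁻¹ * ∑ i ∈ Finset.range n, g t δ R x0 μ (x i)
          ≤ (n : ℝ)⁻¹ * ∑ i ∈ Finset.range n, (g t δ R x0 νn (x i) + ε / 3) :=
            mul_le_mul_of_nonneg_left (Finset.sum_le_sum hterm) (by positivity)
        _ = (n : ℝ)⁻¹ * ∑ i ∈ Finset.range n, g t δ R x0 νn (x i) + ε / 3 := by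
            rw [Finset.sum_add_distrib, mul_add, Finset.sum_const, Finset.card_range,
              nsmul_eq_mul, ← mul_assoc, inv_mul_cancel₀ hn0.ne', one_mul]
        _ ≤ (n : ℝ)⁻¹ * ((n:ℝ)⁻¹ * ((n:ℝ) * δ ^ (-t) + (n:ℝ)^2 * c)) + ε / 3 := by
            refine add_le_add_left (mul_le_mul_of_nonneg_left ?_ (by positivity)) _
            calc ∑ i ∈ Finset.range n, g t δ R x0 νn (x i)
                ≤ ∑ i ∈ Finset.range n, (n:ℝ)⁻¹ *
                  (δ ^ (-t) + ∑ j ∈ (Finset.range n).erase i, F t δ (x i) (x j)) :=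
                  Finset.sum_le_sum hinner
              _ = (n:ℝ)⁻¹ * ((n:ℝ) * δ ^ (-t) + ∑ i ∈ Finset.range n,
                  ∑ j ∈ (Finset.range n).erase i, F t δ (x i) (x j)) := by
                  rw [← Finset.mul_sum, Finset.sum_add_distrib, Finset.sum_const,
                    Finset.card_range, nsmul_eq_mul]
              _ ≤ (n:ℝ)⁻¹ * ((n:ℝ) * δ ^ (-t) + (n:ℝ)^2 * c) :=
                  mul_le_mul_of_nonneg_left (add_le_add_right (hsum n hn2) _) (by positivity)
        _ = δ ^ (-t) / (n:ℝ) + c + ε / 3 := by field_simp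
        _ ≤ ε / 3 + c + ε / 3 := by linarith
        _ ≤ c + ε := by linarith
    exact le_of_tendsto hw hev
  by_contra hcon
  push_neg at hcon
  have := key ((∫ p, g t δ R x0 μ p ∂μ - c) / 2) (by linarith)
  linarith


lemma double_lintegral_iSup (f : ℕ → X → X → ℝ≥0∞)
    (hmeas : ∀ k, Measurable (fun pq : X × X => f k pq.1 pq.2))
    (hmono : ∀ p q, Monotone (fun k => f k p q)) :
    ∫⁻ p, ∫⁻ q, ⨆ k, f k p q ∂μ ∂μ = ⨆ k, ∫⁻ p, ∫⁻ q, f k p q ∂μ ∂μ := by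
  have inner : ∀ p, ∫⁻ q, ⨆ k, f k p q ∂μ = ⨆ k, ∫⁻ q, f k p q ∂μ := fun p =>
    lintegral_iSup (fun k => (hmeas k).comp (measurable_prodMk_left (x := p)))
      (fun i j hij q => hmono p q hij)
  rw [lintegral_congr inner]
  exact lintegral_iSup (fun k => (hmeas k).lintegral_prod_right')
    (fun i j hij p => lintegral_mono fun q => hmono p q hij)

lemma ofReal_g_eq (ht : 0 < t) (hδ : 0 < δ) (R : ℝ) (x0 : X) (p : X) :
    ∫⁻ q, ENNReal.ofReal (chi x0 R p * (chi x0 R q * F t δ p q)) ∂μ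
      = ENNReal.ofReal (g t δ R x0 μ p) := by
  have h1 : ∀ q : X, ENNReal.ofReal (chi x0 R p * (chi x0 R q * F t δ p q))
      = ENNReal.ofReal (chi x0 R p) * ENNReal.ofReal (chi x0 R q * F t δ p q) := fun q =>
    ENNReal.ofReal_mul (chi_nonneg x0 R p)
  simp only [h1]
  rw [lintegral_const_mul' _ _ ENNReal.ofReal_ne_top]
  rw [← ofReal_integral_eq_lintegral_ofReal
    ((integrand_cont ht hδ p).integrable_of_hasCompactSupport (integrand_hcs p))
    (Eventually.of_forall fun q =>
      mul_nonneg (chi_nonneg x0 R q) (F_pos ht hδ p q).le)]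
  rw [← ENNReal.ofReal_mul (chi_nonneg x0 R p)]
  rfl

lemma energy_bound (ht : 0 < t)
    (hweak : ∀ f : X → ℝ, Continuous f → (∃ C, ∀ p, |f p| ≤ C) →
      Tendsto (fun n : ℕ =>
          ∫ p, f p ∂((n : ℝ≥0∞)⁻¹ • ∑ i ∈ Finset.range n, Measure.dirac (x i)))
        atTop (nhds (∫ p, f p ∂μ)))
    (x0 : X) {c : ℝ} (hc : 0 ≤ c)
    (hsum : ∀ δ : ℝ, 0 < δ → ∀ n : ℕ, 2 ≤ n → ∑ i ∈ Finset.range n,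
      ∑ j ∈ (Finset.range n).erase i, F t δ (x i) (x j) ≤ (n : ℝ) ^ 2 * c) :
    ∫⁻ p, ∫⁻ q, edist p q ^ (-t) ∂μ ∂μ ≤ ENNReal.ofReal c := by
  -- Pass 1 : for every positive δ, the truncated energy is at most `ofReal c`
  have pass1 : ∀ δ : ℝ, 0 < δ →
      ∫⁻ p, ∫⁻ q, ENNReal.ofReal (F t δ p q) ∂μ ∂μ ≤ ENNReal.ofReal c := by
    intro δ hδ
    have hpt : ∀ p q : X, (⨆ R : ℕ, ENNReal.ofReal
        (chi x0 (R : ℝ) p * (chi x0 (R : ℝ) q * F t δ p q))) = ENNReal.ofReal (F t δ p q) := by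
      intro p q
      apply le_antisymm
      · refine iSup_le fun R => ENNReal.ofReal_le_ofReal ?_
        calc chi x0 (R : ℝ) p * (chi x0 (R : ℝ) q * F t δ p q)
            ≤ 1 * (1 * F t δ p q) := by
              refine mul_le_mul (chi_le_one _ _ _) ?_ ?_ zero_le_one
              · exact mul_le_mul (chi_le_one _ _ _) le_rfl (F_pos ht hδ p q).le zero_le_one
              · exact mul_nonneg (chi_nonneg _ _ _) (F_pos ht hδ p q).le
          _ = F t δ p q := by ring
      · obtain ⟨R, hR⟩ := exists_nat_ge (max (dist p x0) (dist q x0))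
        refine le_trans (le_of_eq ?_) (le_iSup _ R)
        rw [chi_eq_one x0 (le_trans (le_max_left _ _) hR),
          chi_eq_one x0 (le_trans (le_max_right _ _) hR), one_mul, one_mul]
    have hmeas : ∀ R : ℕ, Measurable (fun pq : X × X =>
        ENNReal.ofReal (chi x0 (R : ℝ) pq.1 * (chi x0 (R : ℝ) pq.2 * F t δ pq.1 pq.2))) := by
      intro R
      apply ENNReal.measurable_ofReal.comp
      exact (((chi_continuous x0 R).comp continuous_fst).mul
        (((chi_continuous x0 R).comp continuous_snd).mul (F_continuous ht hδ))).measurable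
    have hmono : ∀ p q : X, Monotone (fun R : ℕ => ENNReal.ofReal
        (chi x0 (R : ℝ) p * (chi x0 (R : ℝ) q * F t δ p q))) := by
      intro p q i j hij
      refine ENNReal.ofReal_le_ofReal ?_
      have hcast : (i : ℝ) ≤ (j : ℝ) := by exact_mod_cast hij
      refine mul_le_mul (chi_mono x0 hcast p) (mul_le_mul (chi_mono x0 hcast q) le_rfl
        (F_pos ht hδ p q).le (chi_nonneg _ _ _))
        (mul_nonneg (chi_nonneg _ _ _) (F_pos ht hδ p q).le) (chi_nonneg _ _ _)
    calc ∫⁻ p, ∫⁻ q, ENNReal.ofReal (F t δ p q) ∂μ ∂μ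
        = ∫⁻ p, ∫⁻ q, ⨆ R : ℕ, ENNReal.ofReal
            (chi x0 (R : ℝ) p * (chi x0 (R : ℝ) q * F t δ p q)) ∂μ ∂μ := by
          refine lintegral_congr fun p => lintegral_congr fun q => (hpt p q).symm
      _ = ⨆ R : ℕ, ∫⁻ p, ∫⁻ q, ENNReal.ofReal
            (chi x0 (R : ℝ) p * (chi x0 (R : ℝ) q * F t δ p q)) ∂μ ∂μ :=
          double_lintegral_iSup μ _ hmeas hmono
      _ ≤ ENNReal.ofReal c := by
          refine iSup_le fun R => ?_
          have := core_bound (R := (R:ℝ)) (x0 := x0) x μ ht hδ hweak hc (hsum δ hδ)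
          calc ∫⁻ p, ∫⁻ q, ENNReal.ofReal
                (chi x0 (R : ℝ) p * (chi x0 (R : ℝ) q * F t δ p q)) ∂μ ∂μ
              = ∫⁻ p, ENNReal.ofReal (g t δ (R : ℝ) x0 μ p) ∂μ :=
                lintegral_congr fun p => ofReal_g_eq μ ht hδ (R : ℝ) x0 p
            _ = ENNReal.ofReal (∫ p, g t δ (R : ℝ) x0 μ p ∂μ) :=
                (ofReal_integral_eq_lintegral_ofReal
                  ((g_cont ht hδ μ (by simp)).integrable_of_hasCompactSupport (g_hcs μ))
                  (Eventually.of_forall fun p => mul_nonneg (chi_nonneg _ _ _)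
                    (integral_nonneg fun q =>
                      mul_nonneg (chi_nonneg _ _ _) (F_pos ht hδ p q).le))).symm
            _ ≤ ENNReal.ofReal c := ENNReal.ofReal_le_ofReal this
  -- Pass 2 : let δ → 0
  have hpt2 : ∀ p q : X,
      (⨆ k : ℕ, ENNReal.ofReal (F t (((k : ℝ) + 1)⁻¹) p q)) = edist p q ^ (-t) := by
    intro p q
    rcases eq_or_ne p q with rfl | hpq
    · rw [edist_self, ENNReal.zero_rpow_of_neg (by linarith)]
      rw [iSup_eq_top]
      intro b hb
      obtain ⟨k, hk⟩ := exists_nat_ge (max 0 (b.toReal + 1) ^ (t⁻¹))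
      refine ⟨k, ?_⟩
      rw [F, dist_self, max_eq_right (by positivity)]
      have h1 : max 0 (b.toReal + 1) ≤ ((k : ℝ) + 1) ^ t := by
        calc max 0 (b.toReal + 1) = (max 0 (b.toReal + 1) ^ (t⁻¹)) ^ t := by
              rw [← Real.rpow_mul (le_max_left _ _), inv_mul_cancel₀ ht.ne', Real.rpow_one]
          _ ≤ ((k : ℝ) + 1) ^ t :=
              Real.rpow_le_rpow (Real.rpow_nonneg (le_max_left _ _) _)
                (le_trans hk (by linarith)) ht.le
      have h2 : ((k : ℝ) + 1)⁻¹ ^ (-t) = ((k : ℝ) + 1) ^ t := by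
        rw [Real.inv_rpow (by positivity), Real.rpow_neg (by positivity), inv_inv]
      rw [h2]
      rw [ENNReal.lt_ofReal_iff_toReal_lt hb.ne]
      calc b.toReal < b.toReal + 1 := by linarith
        _ ≤ max 0 (b.toReal + 1) := le_max_right _ _
        _ ≤ ((k : ℝ) + 1) ^ t := h1
    · have hd : 0 < dist p q := dist_pos.mpr hpq
      rw [edist_dist, ENNReal.ofReal_rpow_of_pos hd]
      apply le_antisymm
      · refine iSup_le fun k => ENNReal.ofReal_le_ofReal ?_
        exact F_le_rpow ht (by positivity) hd
      · obtain ⟨k, hk⟩ := exists_nat_ge (dist p q)⁻¹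
        have hk1 : ((k : ℝ) + 1)⁻¹ ≤ dist p q := by
          rw [inv_le_comm₀ (by positivity) hd]
          exact le_trans hk (by linarith)
        have heq : F t (((k : ℝ) + 1)⁻¹) p q = dist p q ^ (-t) := by
          rw [F, max_eq_left hk1]
        exact le_trans (le_of_eq (by rw [heq])) (le_iSup _ k)
  have hmeas2 : ∀ k : ℕ, Measurable (fun pq : X × X =>
      ENNReal.ofReal (F t (((k : ℝ) + 1)⁻¹) pq.1 pq.2)) := fun k =>
    ENNReal.measurable_ofReal.comp (F_continuous ht (by positivity)).measurable
  have hmono2 : ∀ p q : X, Monotone (fun k : ℕ =>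
      ENNReal.ofReal (F t (((k : ℝ) + 1)⁻¹) p q)) := by
    intro p q i j hij
    refine ENNReal.ofReal_le_ofReal ?_
    rw [F, F]
    refine Real.rpow_le_rpow_of_nonpos (lt_max_of_lt_right (by positivity)) ?_
      (by linarith)
    refine max_le_max le_rfl (inv_anti₀ (by positivity) ?_)
    have : (i : ℝ) ≤ (j : ℝ) := by exact_mod_cast hij
    linarith
  calc ∫⁻ p, ∫⁻ q, edist p q ^ (-t) ∂μ ∂μ
      = ∫⁻ p, ∫⁻ q, ⨆ k : ℕ, ENNReal.ofReal (F t (((k : ℝ) + 1)⁻¹) p q) ∂μ ∂μ :=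
        lintegral_congr fun p => lintegral_congr fun q => (hpt2 p q).symm
    _ = ⨆ k : ℕ, ∫⁻ p, ∫⁻ q, ENNReal.ofReal (F t (((k : ℝ) + 1)⁻¹) p q) ∂μ ∂μ :=
        double_lintegral_iSup μ _ hmeas2 hmono2
    _ ≤ ENNReal.ofReal c := iSup_le fun k => pass1 _ (by positivity)

end Core

section Frostman

variable [MeasurableSpace X] [BorelSpace X] [SecondCountableTopology X]

lemma dimH_ge_of_energy (μ : Measure X) [IsProbabilityMeasure μ] (ht : 0 < t)
    (hI : ∫⁻ p, ∫⁻ q, edist p q ^ (-t) ∂μ ∂μ ≠ ∞) :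
    ENNReal.ofReal t ≤ dimH {p : X | ∀ r : ℝ, 0 < r → 0 < μ (Metric.ball p r)} := by
  set S := {p : X | ∀ r : ℝ, 0 < r → 0 < μ (Metric.ball p r)} with hS
  set u : X → ℝ≥0∞ := fun p => ∫⁻ q, edist p q ^ (-t) ∂μ with hu
  have humeas : Measurable u :=
    (ENNReal.continuous_rpow_const.measurable.comp measurable_edist).lintegral_prod_right'
  have hae : ∀ᵐ p ∂μ, u p < ∞ := ae_lt_top humeas hI
  -- find a level M of positive measure
  obtain ⟨M, hM⟩ : ∃ M : ℕ, 0 < μ {p | u p ≤ (M : ℝ≥0∞)} := by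
    by_contra hcon
    push_neg at hcon
    simp only [le_zero_iff] at hcon
    have hcover : {p : X | u p < ∞} ⊆ ⋃ M : ℕ, {p | u p ≤ (M : ℝ≥0∞)} := by
      intro p hp
      obtain ⟨n, hn⟩ := ENNReal.exists_nat_gt hp.ne
      exact Set.mem_iUnion.mpr ⟨n, hn.le⟩
    have h0 : μ {p : X | u p < ∞} = 0 :=
      measure_mono_null hcover (measure_iUnion_null fun M => hcon M)
    have h1 : μ {p : X | u p < ∞} = 1 := by
      rw [← measure_univ (μ := μ)]
      apply measure_congr
      rw [Filter.eventuallyEq_univ]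
      exact hae.mono fun p hp => hp
    rw [h0] at h1
    exact zero_ne_one h1
  -- the complement of the support is null
  have hSnull : μ Sᶜ = 0 := by
    apply measure_null_of_locally_null
    intro p hp
    simp only [hS, Set.mem_compl_iff, Set.mem_setOf_eq, not_forall] at hp
    obtain ⟨r, hr, hball⟩ := hp
    refine ⟨Metric.ball p r, mem_nhdsWithin_of_mem_nhds (Metric.ball_mem_nhds p hr), ?_⟩
    simpa using hball
  set A := {p : X | u p ≤ (M : ℝ≥0∞)} ∩ S with hA
  have hAmeas : MeasurableSet A := by
    refine (humeas measurableSet_Iic).inter ?_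
    have hopen : IsOpen Sᶜ := by
      rw [Metric.isOpen_iff]
      intro p hp
      simp only [hS, Set.mem_compl_iff, Set.mem_setOf_eq, not_forall] at hp
      obtain ⟨r, hr, hball⟩ := hp
      replace hball : μ (Metric.ball p r) = 0 := by simpa using hball
      refine ⟨r / 2, by linarith, fun q hq => ?_⟩
      simp only [hS, Set.mem_compl_iff, Set.mem_setOf_eq, not_forall]
      refine ⟨r / 2, by linarith, ?_⟩
      have hsub : Metric.ball q (r / 2) ⊆ Metric.ball p r := by
        intro z hz
        rw [Metric.mem_ball] at *
        calc dist z p ≤ dist z q + dist q p := dist_triangle z q p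
          _ < r / 2 + r / 2 := add_lt_add hz hq
          _ = r := by ring
      simp [measure_mono_null hsub hball]
    simpa using hopen.isClosed_compl.measurableSet
  have hApos : 0 < μ A := by
    have h1 : μ {p : X | u p ≤ (M : ℝ≥0∞)} = μ A := (measure_inter_conull hSnull).symm
    rwa [h1] at hM
  -- Frostman condition on `A`
  have hball : ∀ p ∈ A, ∀ r : ℝ, 0 < r →
      μ (Metric.ball p r) ≤ (M : ℝ≥0∞) * (ENNReal.ofReal r) ^ t := by
    intro p hp r hr
    have hr0 : ENNReal.ofReal r ≠ 0 := by
      simp [ENNReal.ofReal_eq_zero, not_le, hr]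
    have hc0 : (ENNReal.ofReal r) ^ (-t) ≠ 0 :=
      (ENNReal.rpow_pos (by positivity) ENNReal.ofReal_ne_top).ne'
    have hcT : (ENNReal.ofReal r) ^ (-t) ≠ ∞ := by
      rw [ENNReal.rpow_neg]
      simp [ENNReal.rpow_eq_zero_iff, hr0, ENNReal.ofReal_ne_top]
    have h1 : (ENNReal.ofReal r) ^ (-t) * μ (Metric.ball p r) ≤ u p := by
      have hmono : ∀ q ∈ Metric.ball p r,
          (ENNReal.ofReal r) ^ (-t) ≤ edist p q ^ (-t) := by
        intro q hq
        have he : edist p q ≤ ENNReal.ofReal r := by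
          rw [edist_dist]
          exact ENNReal.ofReal_le_ofReal (by rw [dist_comm]; exact (Metric.mem_ball.mp hq).le)
        calc (ENNReal.ofReal r) ^ (-t) = ((ENNReal.ofReal r) ^ t)⁻¹ := ENNReal.rpow_neg _ _
          _ ≤ (edist p q ^ t)⁻¹ := ENNReal.inv_le_inv.mpr (ENNReal.rpow_le_rpow he ht.le)
          _ = edist p q ^ (-t) := (ENNReal.rpow_neg _ _).symm
      calc (ENNReal.ofReal r) ^ (-t) * μ (Metric.ball p r)
          = ∫⁻ _ in Metric.ball p r, (ENNReal.ofReal r) ^ (-t) ∂μ :=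
            (setLIntegral_const _ _).symm
        _ ≤ ∫⁻ q in Metric.ball p r, edist p q ^ (-t) ∂μ :=
            setLIntegral_mono (ENNReal.continuous_rpow_const.measurable.comp
              (measurable_edist_right)) hmono
        _ ≤ u p := setLIntegral_le_lintegral _ _
    calc μ (Metric.ball p r)
        = ((ENNReal.ofReal r) ^ (-t))⁻¹ * ((ENNReal.ofReal r) ^ (-t) * μ (Metric.ball p r)) := by
          rw [← mul_assoc, ENNReal.inv_mul_cancel hc0 hcT, one_mul]
      _ ≤ ((ENNReal.ofReal r) ^ (-t))⁻¹ * (M : ℝ≥0∞) :=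
          mul_le_mul_right (h1.trans hp.1) _
      _ = (M : ℝ≥0∞) * (ENNReal.ofReal r) ^ t := by
          rw [ENNReal.rpow_neg, inv_inv, mul_comm]
  -- mass distribution principle
  set cE : ℝ≥0∞ := ((M : ℝ≥0∞) + 1) * (2 : ℝ≥0∞) ^ t with hcE
  have hcE0 : cE ≠ 0 := by
    rw [hcE]
    exact mul_ne_zero (by simp) (ENNReal.rpow_pos two_pos ENNReal.ofNat_ne_top).ne'
  have hcET : cE ≠ ∞ := by
    rw [hcE]
    exact ENNReal.mul_ne_top (by simp) (ENNReal.rpow_ne_top_of_nonneg ht.le ENNReal.ofNat_ne_top)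
  set ν : Measure X := cE⁻¹ • μ.restrict A with hν
  have hfrost : ∀ s : Set X, EMetric.diam s ≤ 1 → ν s ≤ EMetric.diam s ^ t := by
    intro s hdiam
    have hνs : ν s = cE⁻¹ * μ (s ∩ A) := by
      rw [hν, Measure.smul_apply, smul_eq_mul, Measure.restrict_apply' hAmeas]
    rcases Set.eq_empty_or_nonempty (s ∩ A) with hempty | ⟨p, hps, hpA⟩
    · rw [hνs, hempty, measure_empty, mul_zero]
      exact zero_le
    rcases eq_or_lt_of_le (show (0:ℝ≥0∞) ≤ EMetric.diam s from zero_le) with hzero | hpos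
    · -- diameter zero: singleton, and singletons of A are null
      have hsub : s ∩ A ⊆ {p} := fun q hq =>
        (EMetric.diam_eq_zero_iff.mp hzero.symm (Set.inter_subset_left hq) hps)
      have hsing : μ {p} = 0 := by
        have hbound : ∀ k : ℕ, μ {p} ≤ (M : ℝ≥0∞) *
            ENNReal.ofReal ((((k : ℝ) + 1)⁻¹) ^ t) := by
          intro k
          have h1 := hball p hpA (((k : ℝ) + 1)⁻¹) (by positivity)
          have h2 : μ {p} ≤ μ (Metric.ball p (((k : ℝ) + 1)⁻¹)) :=
            measure_mono (Set.singleton_subset_iff.mpr (Metric.mem_ball_self (by positivity)))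
          rw [← ENNReal.ofReal_rpow_of_pos (by positivity)]
          exact h2.trans h1
        have htend : Tendsto (fun k : ℕ => (M : ℝ≥0∞) *
            ENNReal.ofReal ((((k : ℝ) + 1)⁻¹) ^ t)) atTop (nhds 0) := by
          have hreal : Tendsto (fun k : ℕ => (((k : ℝ) + 1)⁻¹) ^ t) atTop (nhds 0) := by
            have h1 : Tendsto (fun k : ℕ => ((k : ℝ) + 1) ^ t) atTop atTop :=
              (tendsto_rpow_atTop ht).comp
                (tendsto_atTop_add_const_right _ _ tendsto_natCast_atTop_atTop)
            have h2 : ∀ k : ℕ, (((k : ℝ) + 1)⁻¹) ^ t = (((k : ℝ) + 1) ^ t)⁻¹ := fun k =>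
              Real.inv_rpow (by positivity) t
            simp only [h2]
            exact h1.inv_tendsto_atTop
          have := ENNReal.tendsto_ofReal hreal
          rw [ENNReal.ofReal_zero] at this
          simpa using ENNReal.Tendsto.const_mul this (Or.inr (ENNReal.natCast_ne_top M))
        exact le_antisymm (ge_of_tendsto' htend hbound) zero_le
      rw [hνs]
      rw [measure_mono_null hsub hsing, mul_zero]
      exact zero_le
    · -- positive diameter
      set D := EMetric.diam s with hD
      have hDT : D ≠ ∞ := (hdiam.trans_lt one_lt_top).ne
      have hDr : 0 < D.toReal := ENNReal.toReal_pos hpos.ne' hDT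
      set r : ℝ := 2 * D.toReal with hr
      have hsub : s ⊆ Metric.ball p r := by
        intro q hq
        rw [Metric.mem_ball]
        have h1 : edist q p ≤ D := EMetric.edist_le_diam_of_mem hq hps
        have h2 : dist q p ≤ D.toReal := by
          rw [dist_edist]
          exact ENNReal.toReal_mono hDT h1
        rw [hr]; linarith
      have h3 : ENNReal.ofReal r = 2 * D := by
        rw [hr, ENNReal.ofReal_mul (by norm_num), ENNReal.ofReal_toReal hDT]
        norm_num
      calc ν s ≤ cE⁻¹ * μ (Metric.ball p r) := by
            rw [hνs]
            exact mul_le_mul_right (measure_mono (Set.inter_subset_left.trans hsub)) _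
        _ ≤ cE⁻¹ * ((M : ℝ≥0∞) * (ENNReal.ofReal r) ^ t) :=
            mul_le_mul_right (hball p hpA r (by positivity)) _
        _ = cE⁻¹ * ((M : ℝ≥0∞) * (2 : ℝ≥0∞) ^ t) * D ^ t := by
            rw [h3, ENNReal.mul_rpow_of_nonneg _ _ ht.le]; ring
        _ ≤ cE⁻¹ * cE * D ^ t := by
            refine mul_le_mul_left (mul_le_mul_right ?_ _) _
            rw [hcE]
            exact mul_le_mul_left (le_self_add) _
        _ = D ^ t := by rw [ENNReal.inv_mul_cancel hcE0 hcET, one_mul]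
  have hle : ν ≤ μH[t] := Measure.le_hausdorffMeasure t ν 1 one_pos hfrost
  have hHA : μH[t] A ≠ 0 := by
    have h1 : ν A ≤ μH[t] A := hle A
    have h2 : 0 < ν A := by
      rw [hν, Measure.smul_apply, smul_eq_mul, Measure.restrict_apply' hAmeas,
        Set.inter_self]
      exact ENNReal.mul_pos (ENNReal.inv_ne_zero.mpr hcET) hApos.ne'
    exact (h2.trans_le h1).ne'
  refine ENNReal.le_of_forall_nnreal_lt fun r hr => ?_
  have hrt : (r : ℝ) < t := by
    have h2 := (ENNReal.lt_ofReal_iff_toReal_lt (by simp : (r : ℝ≥0∞) ≠ ∞)).mp hr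
    simpa using h2
  have hinf : μH[(r : ℝ)] A = ∞ :=
    (Measure.hausdorffMeasure_zero_or_top hrt A).resolve_left hHA
  calc (r : ℝ≥0∞) ≤ dimH A := le_dimH_of_hausdorffMeasure_eq_top hinf
    _ ≤ dimH S := dimH_mono Set.inter_subset_right

end Frostman
end AdaptAux

open AdaptAux in
/-- If a sequence of distinct points generates `s`-adaptable sets `P_n` and the induced
normalized counting measures converge weak-star to a probability measure `μ`, then the
Hausdorff dimension of the support of `μ` is at least `s`. -/
theorem dimH_support_ge_of_adaptable
    {d : ℕ} (x : ℕ → EuclideanSpace ℝ (Fin d)) (hx : Function.Injective x)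
    (s : ℝ) (hs : 0 ≤ s)
    (hadapt : ∀ t : ℝ, 0 ≤ t → t < s → ∃ C : ℝ≥0∞, C ≠ ∞ ∧ ∀ n : ℕ, 2 ≤ n →
      ((n : ℝ≥0∞) * ((n : ℝ≥0∞) - 1))⁻¹ *
          ∑ i ∈ Finset.range n, ∑ j ∈ (Finset.range n).erase i,
            (edist (x i) (x j)) ^ (-t) ≤ C)
    (μ : Measure (EuclideanSpace ℝ (Fin d))) [IsProbabilityMeasure μ]
    (hweak : ∀ f : EuclideanSpace ℝ (Fin d) → ℝ, Continuous f → (∃ C, ∀ p, |f p| ≤ C) →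
      Tendsto (fun n : ℕ =>
          ∫ p, f p ∂((n : ℝ≥0∞)⁻¹ • ∑ i ∈ Finset.range n, Measure.dirac (x i)))
        atTop (nhds (∫ p, f p ∂μ))) :
    ENNReal.ofReal s ≤
      dimH {p : EuclideanSpace ℝ (Fin d) | ∀ r : ℝ, 0 < r → 0 < μ (Metric.ball p r)} := by
  refine ENNReal.le_of_forall_nnreal_lt fun ρ hρ => ?_
  have hρs : (ρ : ℝ) < s := by
    have h2 := (ENNReal.lt_ofReal_iff_toReal_lt (by simp : (ρ : ℝ≥0∞) ≠ ∞)).mp hρ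
    simpa using h2
  have hρ0 : (0:ℝ) ≤ (ρ : ℝ) := ρ.coe_nonneg
  set t : ℝ := ((ρ : ℝ) + s) / 2 with htdef
  have ht : 0 < t := by rw [htdef]; linarith
  have hts : t < s := by rw [htdef]; linarith
  obtain ⟨C, hCfin, hC⟩ := hadapt t ht.le hts
  -- translate the adaptability bound into a real sum bound for the truncated kernels
  have hsum : ∀ δ : ℝ, 0 < δ → ∀ n : ℕ, 2 ≤ n → ∑ i ∈ Finset.range n,
      ∑ j ∈ (Finset.range n).erase i, F t δ (x i) (x j) ≤ (n : ℝ) ^ 2 * C.toReal := by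
    intro δ hδ n hn
    have hn1 : (1 : ℝ≥0∞) < (n : ℝ≥0∞) := by exact_mod_cast Nat.lt_of_lt_of_le one_lt_two hn
    have hne0 : ((n : ℝ≥0∞) * ((n : ℝ≥0∞) - 1)) ≠ 0 := by
      apply mul_ne_zero
      · exact_mod_cast (Nat.lt_of_lt_of_le Nat.zero_lt_two hn).ne'
      · rw [ne_eq, tsub_eq_zero_iff_le]
        exact not_le.mpr hn1
    have hneT : ((n : ℝ≥0∞) * ((n : ℝ≥0∞) - 1)) ≠ ∞ :=
      ENNReal.mul_ne_top (ENNReal.natCast_ne_top n)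
        (ne_top_of_le_ne_top (ENNReal.natCast_ne_top n) tsub_le_self)
    have hS1 : ∑ i ∈ Finset.range n, ∑ j ∈ (Finset.range n).erase i,
        (edist (x i) (x j)) ^ (-t) ≤ (n : ℝ≥0∞) * ((n : ℝ≥0∞) * C) := by
      have h2 := mul_le_mul_right (hC n hn) ((n : ℝ≥0∞) * ((n : ℝ≥0∞) - 1))
      rw [← mul_assoc, ENNReal.mul_inv_cancel hne0 hneT, one_mul] at h2
      refine h2.trans ?_
      calc (n : ℝ≥0∞) * ((n : ℝ≥0∞) - 1) * C ≤ (n : ℝ≥0∞) * (n : ℝ≥0∞) * C :=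
            mul_le_mul_left (mul_le_mul_right tsub_le_self _) _
        _ = (n : ℝ≥0∞) * ((n : ℝ≥0∞) * C) := by ring
    have hterm : ∀ i ∈ Finset.range n, ∀ j ∈ (Finset.range n).erase i,
        (edist (x i) (x j)) ^ (-t) = ENNReal.ofReal (dist (x i) (x j) ^ (-t)) := by
      intro i _ j hj
      have hij : x i ≠ x j := fun h => (Finset.ne_of_mem_erase hj) (hx h).symm
      have hd : 0 < dist (x i) (x j) := dist_pos.mpr hij
      rw [edist_dist, ENNReal.ofReal_rpow_of_pos hd]
    have hofreal : ENNReal.ofReal (∑ i ∈ Finset.range n, ∑ j ∈ (Finset.range n).erase i,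
        dist (x i) (x j) ^ (-t)) ≤ (n : ℝ≥0∞) * ((n : ℝ≥0∞) * C) := by
      rw [ENNReal.ofReal_sum_of_nonneg (fun i _ => Finset.sum_nonneg fun j hj =>
        Real.rpow_nonneg dist_nonneg _)]
      calc ∑ i ∈ Finset.range n, ENNReal.ofReal (∑ j ∈ (Finset.range n).erase i,
              dist (x i) (x j) ^ (-t))
          = ∑ i ∈ Finset.range n, ∑ j ∈ (Finset.range n).erase i,
              ENNReal.ofReal (dist (x i) (x j) ^ (-t)) := by
            refine Finset.sum_congr rfl fun i _ => ?_
            exact ENNReal.ofReal_sum_of_nonneg fun j _ => Real.rpow_nonneg dist_nonneg _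
        _ = ∑ i ∈ Finset.range n, ∑ j ∈ (Finset.range n).erase i,
              (edist (x i) (x j)) ^ (-t) := by
            refine Finset.sum_congr rfl fun i hi => Finset.sum_congr rfl fun j hj =>
              (hterm i hi j hj).symm
        _ ≤ (n : ℝ≥0∞) * ((n : ℝ≥0∞) * C) := hS1
    have hreal : ∑ i ∈ Finset.range n, ∑ j ∈ (Finset.range n).erase i,
        dist (x i) (x j) ^ (-t) ≤ (n : ℝ) ^ 2 * C.toReal := by
      have hfin : (n : ℝ≥0∞) * ((n : ℝ≥0∞) * C) ≠ ∞ :=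
        ENNReal.mul_ne_top (ENNReal.natCast_ne_top n)
          (ENNReal.mul_ne_top (ENNReal.natCast_ne_top n) hCfin)
      have h4 := (ENNReal.ofReal_le_iff_le_toReal hfin).mp hofreal
      refine h4.trans (le_of_eq ?_)
      rw [ENNReal.toReal_mul, ENNReal.toReal_mul]
      simp [ENNReal.toReal_natCast]
      ring
    refine le_trans (Finset.sum_le_sum fun i hi => Finset.sum_le_sum fun j hj => ?_) hreal
    have hij : x i ≠ x j := fun h => (Finset.ne_of_mem_erase hj) (hx h).symm
    exact F_le_rpow ht hδ (dist_pos.mpr hij)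
  have henergy := energy_bound x μ ht hweak (x 0) ENNReal.toReal_nonneg hsum
  have hfin : ∫⁻ p, ∫⁻ q, edist p q ^ (-t) ∂μ ∂μ ≠ ∞ :=
    (henergy.trans_lt ENNReal.ofReal_lt_top).ne
  have hdim := dimH_ge_of_energy μ ht hfin
  refine le_trans ?_ hdim
  rw [← ENNReal.ofReal_coe_nnreal]
  exact ENNReal.ofReal_le_ofReal (by rw [htdef]; linarith)
end

section
/- For every s ∈ (0, d] and every sequence {e_k} of positive real numbers, there exists a sequence of points {x_n} ⊂ ℝ^d with all points distinct, generating P_n = {x_1,...,x_n}, and an increasing sequence of indices {n_k}, such that J_s(P_{n_k}) = e_k for all k. -/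
open Finset Filter
set_option maxHeartbeats 1000000

noncomputable def Epow (s : ℝ) (n : ℕ) (x : ℕ → ℝ) : ℝ :=
  ∑ i ∈ Finset.range n, ∑ j ∈ Finset.range n, |x i - x j| ^ (-s)

lemma Epow_nonneg (s : ℝ) (n : ℕ) (x : ℕ → ℝ) : 0 ≤ Epow s n x := by
  apply Finset.sum_nonneg; intro i _; apply Finset.sum_nonneg; intro j _
  exact Real.rpow_nonneg (abs_nonneg _) _

lemma exists_extension (s : ℝ) (hs : 0 < s) (e : ℝ) (he : 0 < e) (x : ℕ → ℝ) (m : ℕ)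
    (hinj : Set.InjOn x (Set.Iio (m : ℕ))) :
    ∃ (x' : ℕ → ℝ) (n : ℕ), m < n ∧ 2 ≤ n ∧ (∀ i < m, x' i = x i) ∧
      Set.InjOn x' (Set.Iio (n : ℕ)) ∧ Epow s n x' = e * ((n : ℝ) * ((n : ℝ) - 1)) := by
  classical
  set C := Epow s m x with hCdef
  have hC : 0 ≤ C := Epow_nonneg _ _ _
  -- choose N
  obtain ⟨N0, hN0⟩ := exists_nat_ge ((C + 3) / e)
  set N := max N0 2 with hNdef
  have hN2 : 2 ≤ N := le_max_right _ _
  have heN : C + 3 ≤ e * N := by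
    rw [div_le_iff₀ he] at hN0
    have : (N0 : ℝ) ≤ N := by exact_mod_cast le_max_left _ _
    nlinarith
  set n := m + N + 1 with hndef
  set T := e * ((n : ℝ) * ((n : ℝ) - 1)) with hTdef
  have hncast : ((n : ℝ)) = (m : ℝ) + N + 1 := by push_cast [hndef]; ring
  have hN2c : (2:ℝ) ≤ (N:ℝ) := by exact_mod_cast hN2
  have hT3 : C + 3 ≤ T := by
    have h1 : e * (N : ℝ) ≤ T := by
      rw [hTdef, hncast]
      have hm : (0:ℝ) ≤ m := Nat.cast_nonneg m
      have hprod : (N:ℝ) ≤ ((m:ℝ) + N + 1) * ((m:ℝ) + N + 1 - 1) := by nlinarith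
      nlinarith
    linarith
  have hT0 : 0 < T := by linarith
  -- choose R
  have hn2pos : (0:ℝ) < 1 / ((n:ℝ)^2) := by
    apply div_pos one_pos; positivity
  obtain ⟨R, hR1, hRs⟩ : ∃ R : ℝ, 1 ≤ R ∧ R ^ (-s) ≤ 1 / ((n:ℝ)^2) := by
    have h := (tendsto_rpow_neg_atTop hs).eventually_lt_const hn2pos
    obtain ⟨R, hR⟩ := (h.and (Filter.eventually_ge_atTop (1:ℝ))).exists
    exact ⟨R, hR.2, hR.1.le⟩
  have hR0 : (0:ℝ) < R := lt_of_lt_of_le one_pos hR1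
  set B := 1 + ∑ i ∈ Finset.range m, |x i| with hBdef
  have hB : ∀ i < m, |x i| ≤ B := by
    intro i hi
    have : |x i| ≤ ∑ i ∈ Finset.range m, |x i| :=
      Finset.single_le_sum (f := fun i => |x i|) (fun j _ => abs_nonneg _) (mem_range.mpr hi)
    linarith
  set P := B + R * N with hPdef
  set y0 : ℕ → ℝ := fun i => if i < m then x i else B + R * ((i:ℝ) - m + 1) with hy0def
  set Y : ℝ → ℕ → ℝ := fun t i => if i = m + N then P + t else y0 i with hYdef
  have hy0old : ∀ i < m, y0 i = x i := by intro i hi; simp [hy0def, hi]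
  have hy0new : ∀ i, m ≤ i → y0 i = B + R * ((i:ℝ) - m + 1) := by
    intro i hi; simp [hy0def, Nat.not_lt.mpr hi]
  -- upper bound on y0
  have hupper : ∀ j < m + N, y0 j ≤ P := by
    intro j hj
    by_cases hjm : j < m
    · rw [hy0old j hjm, hPdef]
      have h1 : x j ≤ |x j| := le_abs_self _
      have h2 : |x j| ≤ B := hB j hjm
      have h3 : (0:ℝ) ≤ R * N := by positivity
      linarith
    · rw [hy0new j (Nat.le_of_not_lt hjm), hPdef]
      have h1 : (j:ℝ) - m + 1 ≤ N := by
        have : (j:ℝ) ≤ (m:ℝ) + N - 1 := by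
          have : j + 1 ≤ m + N := hj
          have := (Nat.cast_le (α := ℝ)).mpr this
          push_cast at this; linarith
        linarith
      nlinarith
  -- gap bound
  have hgap : ∀ i j, i < j → j < m + N → m ≤ j → R ≤ y0 j - y0 i := by
    intro i j hij hjn hmj
    by_cases him : i < m
    · rw [hy0old i him, hy0new j hmj]
      have h1 : x i ≤ B := le_trans (le_abs_self _) (hB i him)
      have h2 : (1:ℝ) ≤ (j:ℝ) - m + 1 := by
        have := (Nat.cast_le (α := ℝ)).mpr hmj; linarith
      nlinarith
    · have hmi : m ≤ i := Nat.le_of_not_lt him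
      rw [hy0new i hmi, hy0new j (le_trans hmi hij.le)]
      have h2 : (i:ℝ) + 1 ≤ (j:ℝ) := by exact_mod_cast hij
      have : y0 j - y0 i = R * ((j:ℝ) - i) := by rw [hy0new i hmi, hy0new j (le_trans hmi hij.le)]; ring
      nlinarith
  have hsneg : (-s) ≤ 0 := neg_nonpos.mpr hs.le
  have hRpow0 : (0:ℝ) ≤ R ^ (-s) := Real.rpow_nonneg hR0.le _
  have hpair : ∀ i j, i < m + N → j < m + N → ¬(i < m ∧ j < m) →
      |y0 i - y0 j| ^ (-s) ≤ R ^ (-s) := by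
    intro i j hi hj hnot
    rcases lt_trichotomy i j with h | h | h
    · have hmj : m ≤ j := by
        by_contra hc
        exact hnot ⟨h.trans (Nat.lt_of_not_le hc), Nat.lt_of_not_le hc⟩
      have hg := hgap i j h hj hmj
      have habs : R ≤ |y0 i - y0 j| := by
        rw [abs_sub_comm, abs_of_nonneg (by linarith)]; linarith
      exact Real.rpow_le_rpow_of_nonpos hR0 habs hsneg
    · subst h
      simp only [sub_self, abs_zero]
      rw [Real.zero_rpow (by simpa using hs.ne' : -s ≠ 0)]
      exact hRpow0
    · have hmi : m ≤ i := by
        by_contra hc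
        exact hnot ⟨Nat.lt_of_not_le hc, h.trans (Nat.lt_of_not_le hc)⟩
      have hg := hgap j i h hi hmi
      have habs : R ≤ |y0 i - y0 j| := by
        rw [abs_of_nonneg (by linarith)]; linarith
      exact Real.rpow_le_rpow_of_nonpos hR0 habs hsneg
  have hsplit : ∀ f : ℕ → ℝ, ∑ i ∈ Finset.range (m+N), f i
      = ∑ i ∈ Finset.range m, f i + ∑ i ∈ Finset.Ico m (m+N), f i := by
    intro f
    rw [Finset.range_eq_Ico, ← Finset.sum_Ico_consecutive _ (Nat.zero_le m) (Nat.le_add_right m N),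
      ← Finset.range_eq_Ico]
  set D0 := Epow s (m+N) y0 with hD0def
  have hD0nn : 0 ≤ D0 := Epow_nonneg _ _ _
  have hD0 : D0 ≤ C + 1 := by
    have hEsplit : D0 = (∑ i ∈ Finset.range m, ∑ j ∈ Finset.range m, |y0 i - y0 j| ^ (-s))
        + ((∑ i ∈ Finset.range m, ∑ j ∈ Finset.Ico m (m+N), |y0 i - y0 j| ^ (-s))
          + (∑ i ∈ Finset.Ico m (m+N), ∑ j ∈ Finset.range (m+N), |y0 i - y0 j| ^ (-s))) := by
      rw [hD0def]
      unfold Epow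
      rw [hsplit (fun i => ∑ j ∈ Finset.range (m+N), |y0 i - y0 j| ^ (-s))]
      have : ∀ i, ∑ j ∈ Finset.range (m+N), |y0 i - y0 j| ^ (-s)
          = ∑ j ∈ Finset.range m, |y0 i - y0 j| ^ (-s)
            + ∑ j ∈ Finset.Ico m (m+N), |y0 i - y0 j| ^ (-s) := fun i => hsplit _
      calc ∑ i ∈ Finset.range m, ∑ j ∈ Finset.range (m+N), |y0 i - y0 j| ^ (-s)
            + ∑ i ∈ Finset.Ico m (m+N), ∑ j ∈ Finset.range (m+N), |y0 i - y0 j| ^ (-s)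
          = ∑ i ∈ Finset.range m, (∑ j ∈ Finset.range m, |y0 i - y0 j| ^ (-s)
              + ∑ j ∈ Finset.Ico m (m+N), |y0 i - y0 j| ^ (-s))
            + ∑ i ∈ Finset.Ico m (m+N), ∑ j ∈ Finset.range (m+N), |y0 i - y0 j| ^ (-s) := by
            rw [Finset.sum_congr rfl fun i _ => this i]
        _ = _ := by rw [Finset.sum_add_distrib]; ring
    have h11 : (∑ i ∈ Finset.range m, ∑ j ∈ Finset.range m, |y0 i - y0 j| ^ (-s)) = C := by
      rw [hCdef]; unfold Epow
      refine Finset.sum_congr rfl fun i hi => Finset.sum_congr rfl fun j hj => ?_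
      rw [hy0old i (Finset.mem_range.mp hi), hy0old j (Finset.mem_range.mp hj)]
    have h12 : (∑ i ∈ Finset.range m, ∑ j ∈ Finset.Ico m (m+N), |y0 i - y0 j| ^ (-s))
        ≤ (m * N : ℝ) * R ^ (-s) := by
      calc ∑ i ∈ Finset.range m, ∑ j ∈ Finset.Ico m (m+N), |y0 i - y0 j| ^ (-s)
          ≤ ∑ _i ∈ Finset.range m, ∑ _j ∈ Finset.Ico m (m+N), R ^ (-s) := by
            refine Finset.sum_le_sum fun i hi => Finset.sum_le_sum fun j hj => ?_
            have hj' := Finset.mem_Ico.mp hj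
            exact hpair i j (lt_of_lt_of_le (Finset.mem_range.mp hi) (Nat.le_add_right m N))
              hj'.2 (fun h => absurd h.2 (Nat.not_lt.mpr hj'.1))
        _ = (m * N : ℝ) * R ^ (-s) := by
            simp [Finset.sum_const, Nat.card_Ico, nsmul_eq_mul]; ring
    have h21 : (∑ i ∈ Finset.Ico m (m+N), ∑ j ∈ Finset.range (m+N), |y0 i - y0 j| ^ (-s))
        ≤ (N * (m+N) : ℝ) * R ^ (-s) := by
      calc ∑ i ∈ Finset.Ico m (m+N), ∑ j ∈ Finset.range (m+N), |y0 i - y0 j| ^ (-s)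
          ≤ ∑ _i ∈ Finset.Ico m (m+N), ∑ _j ∈ Finset.range (m+N), R ^ (-s) := by
            refine Finset.sum_le_sum fun i hi => Finset.sum_le_sum fun j hj => ?_
            have hi' := Finset.mem_Ico.mp hi
            exact hpair i j hi'.2 (Finset.mem_range.mp hj)
              (fun h => absurd h.1 (Nat.not_lt.mpr hi'.1))
        _ = (N * (m+N) : ℝ) * R ^ (-s) := by
            simp [Finset.sum_const, Nat.card_Ico, nsmul_eq_mul]; ring
    have hcoef : (m * N : ℝ) + (N * (m+N) : ℝ) ≤ ((n:ℝ))^2 := by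
      rw [hncast]
      have hm : (0:ℝ) ≤ m := Nat.cast_nonneg m
      have hN : (0:ℝ) ≤ N := Nat.cast_nonneg N
      push_cast
      nlinarith
    have hfin : ((n:ℝ))^2 * R ^ (-s) ≤ 1 := by
      have hnn : (0:ℝ) < ((n:ℝ))^2 := by positivity
      calc ((n:ℝ))^2 * R ^ (-s) ≤ ((n:ℝ))^2 * (1 / ((n:ℝ))^2) :=
            mul_le_mul_of_nonneg_left hRs hnn.le
        _ = 1 := mul_one_div_cancel hnn.ne'
    have := add_le_add h12 h21
    nlinarith [hRpow0]
  have hfin2 : ((n:ℝ))^2 * R ^ (-s) ≤ 1 := by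
    have hnn : (0:ℝ) < ((n:ℝ))^2 := by positivity
    calc ((n:ℝ))^2 * R ^ (-s) ≤ ((n:ℝ))^2 * (1 / ((n:ℝ))^2) :=
          mul_le_mul_of_nonneg_left hRs hnn.le
      _ = 1 := mul_one_div_cancel hnn.ne'
  set phi : ℝ → ℝ := fun t => D0 + 2 * ∑ j ∈ Finset.range (m+N), (P + t - y0 j) ^ (-s)
    with hphidef
  have hYE : ∀ t : ℝ, 0 < t → Epow s n (Y t) = phi t := by
    intro t ht
    have hYeq : ∀ i, i < m + N → Y t i = y0 i := by
      intro i hi; simp [hYdef, Nat.ne_of_lt hi]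
    have htop : Y t (m+N) = P + t := by simp [hYdef]
    have hcross : ∀ j, j < m + N → |Y t (m+N) - Y t j| ^ (-s) = (P + t - y0 j) ^ (-s) := by
      intro j hj
      rw [htop, hYeq j hj, abs_of_pos (by have := hupper j hj; linarith)]
    show (∑ i ∈ Finset.range n, ∑ j ∈ Finset.range n, |Y t i - Y t j| ^ (-s)) = phi t
    rw [hndef]
    rw [Finset.sum_range_succ]
    simp only [Finset.sum_range_succ]
    rw [Finset.sum_add_distrib]
    have h1 : ∑ i ∈ Finset.range (m+N), ∑ j ∈ Finset.range (m+N), |Y t i - Y t j| ^ (-s)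
        = D0 := by
      rw [hD0def]
      show _ = ∑ i ∈ Finset.range (m+N), ∑ j ∈ Finset.range (m+N), |y0 i - y0 j| ^ (-s)
      refine Finset.sum_congr rfl fun i hi => Finset.sum_congr rfl fun j hj => ?_
      rw [hYeq i (Finset.mem_range.mp hi), hYeq j (Finset.mem_range.mp hj)]
    have h2 : ∑ i ∈ Finset.range (m+N), |Y t i - Y t (m+N)| ^ (-s)
        = ∑ j ∈ Finset.range (m+N), (P + t - y0 j) ^ (-s) := by
      refine Finset.sum_congr rfl fun i hi => ?_
      rw [abs_sub_comm]; exact hcross i (Finset.mem_range.mp hi)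
    have h3 : ∑ j ∈ Finset.range (m+N), |Y t (m+N) - Y t j| ^ (-s)
        = ∑ j ∈ Finset.range (m+N), (P + t - y0 j) ^ (-s) :=
      Finset.sum_congr rfl fun j hj => hcross j (Finset.mem_range.mp hj)
    have h4 : |Y t (m+N) - Y t (m+N)| ^ (-s) = 0 := by
      rw [sub_self, abs_zero, Real.zero_rpow (by simpa using hs.ne' : -s ≠ 0)]
    rw [h1, h2, h3, h4, hphidef]; ring
  have hphiR : phi R ≤ T := by
    have hterm : ∀ j, j < m + N → (P + R - y0 j) ^ (-s) ≤ R ^ (-s) := fun j hj =>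
      Real.rpow_le_rpow_of_nonpos hR0 (by have := hupper j hj; linarith) hsneg
    have hsum : ∑ j ∈ Finset.range (m+N), (P + R - y0 j) ^ (-s) ≤ ((m+N : ℕ) : ℝ) * R ^ (-s) := by
      calc ∑ j ∈ Finset.range (m+N), (P + R - y0 j) ^ (-s)
          ≤ ∑ _j ∈ Finset.range (m+N), R ^ (-s) :=
            Finset.sum_le_sum fun j hj => hterm j (Finset.mem_range.mp hj)
        _ = ((m+N : ℕ) : ℝ) * R ^ (-s) := by simp [Finset.sum_const, nsmul_eq_mul]
    have hmn : ((m+N:ℕ):ℝ) ≤ ((n:ℝ))^2 := by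
      rw [hncast]
      have hm : (0:ℝ) ≤ m := Nat.cast_nonneg m
      have hN : (0:ℝ) ≤ N := Nat.cast_nonneg N
      push_cast
      nlinarith
    have h2 : ((m+N:ℕ):ℝ) * R ^ (-s) ≤ 1 :=
      le_trans (mul_le_mul_of_nonneg_right hmn hRpow0) hfin2
    rw [hphidef]
    simp only
    nlinarith
  set t1 := T ^ (-s⁻¹) with ht1def
  have ht1pos : 0 < t1 := Real.rpow_pos_of_pos hT0 _
  have ht1lt : t1 < 1 :=
    Real.rpow_lt_one_of_one_lt_of_neg (by linarith : 1 < T) (neg_neg_iff_pos.mpr (inv_pos.mpr hs))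
  have ht1R : t1 ≤ R := le_trans ht1lt.le hR1
  have ht1pow : t1 ^ (-s) = T := by
    rw [ht1def, ← Real.rpow_mul hT0.le, neg_mul_neg, inv_mul_cancel₀ hs.ne', Real.rpow_one]
  have hphit1 : T ≤ phi t1 := by
    have hmN1 : 1 ≤ m + N := by omega
    set jstar := m + N - 1 with hjdef
    have hjlt : jstar < m + N := by omega
    have hjm : m ≤ jstar := by omega
    have hjcast : ((jstar:ℝ)) = (m:ℝ) + N - 1 := by
      rw [hjdef, Nat.cast_sub hmN1]; push_cast; ring
    have hy0j : y0 jstar = P := by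
      rw [hy0new jstar hjm, hjcast, hPdef]; ring
    have hterm : (P + t1 - y0 jstar) ^ (-s) = T := by
      rw [hy0j, show P + t1 - P = t1 by ring, ht1pow]
    have hsum : (P + t1 - y0 jstar) ^ (-s) ≤ ∑ j ∈ Finset.range (m+N), (P + t1 - y0 j) ^ (-s) :=
      Finset.single_le_sum (f := fun j => (P + t1 - y0 j) ^ (-s))
        (fun j hj => Real.rpow_nonneg
          (by have := hupper j (Finset.mem_range.mp hj); linarith) _)
        (Finset.mem_range.mpr hjlt)
    rw [hphidef]
    simp only
    nlinarith [hterm ▸ hsum]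
  have hcont : ContinuousOn phi (Set.Icc t1 R) := by
    rw [hphidef]
    refine continuousOn_const.add (continuousOn_const.mul ?_)
    refine continuousOn_finset_sum _ fun j hj => ?_
    intro t ht
    have hbase : P + t - y0 j ≠ 0 := by
      have h1 := hupper j (Finset.mem_range.mp hj)
      have h2 := ht.1
      nlinarith
    have haff : ContinuousAt (fun u : ℝ => P + u - y0 j) t :=
      (((continuous_const.add continuous_id).sub continuous_const).continuousAt)
    have hca : ContinuousAt (fun u : ℝ => (P + u - y0 j) ^ (-s)) t :=
      ContinuousAt.comp (g := fun x : ℝ => x ^ (-s)) (f := fun u : ℝ => P + u - y0 j)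
        (Real.continuousAt_rpow_const _ (-s) (Or.inl hbase)) haff
    exact hca.continuousWithinAt
  obtain ⟨t, htmem, htval⟩ := intermediate_value_Icc' ht1R hcont ⟨hphiR, hphit1⟩
  have htpos : 0 < t := lt_of_lt_of_le ht1pos htmem.1
  have hNpos : 0 < N := by omega
  have hord : ∀ i j, i < j → j < n → m ≤ j → Y t i < Y t j := by
    intro i j hij hjn hmj
    by_cases hjtop : j = m + N
    · have hi' : i < m + N := by omega
      have hYi : Y t i = y0 i := by simp [hYdef, Nat.ne_of_lt hi']
      have hYj : Y t j = P + t := by simp [hYdef, hjtop]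
      rw [hYi, hYj]
      have := hupper i hi'
      linarith
    · have hj' : j < m + N := by
        have : j < n := hjn
        omega
      have hi' : i < m + N := hij.trans hj'
      have hYi : Y t i = y0 i := by simp [hYdef, Nat.ne_of_lt hi']
      have hYj : Y t j = y0 j := by simp [hYdef, Nat.ne_of_lt hj']
      rw [hYi, hYj]
      have hjc : ((m:ℝ)) ≤ (j:ℝ) := by exact_mod_cast hmj
      by_cases him : i < m
      · rw [hy0old i him, hy0new j hmj]
        have h1 : x i ≤ B := le_trans (le_abs_self _) (hB i him)
        nlinarith
      · have hmi : m ≤ i := Nat.le_of_not_lt him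
        rw [hy0new i hmi, hy0new j hmj]
        have h2 : (i:ℝ) + 1 ≤ (j:ℝ) := by exact_mod_cast hij
        nlinarith
  refine ⟨Y t, n, by omega, by omega, ?_, ?_, ?_⟩
  · intro i hi
    have hi' : i ≠ m + N := by omega
    simp only [hYdef]
    rw [if_neg hi', hy0old i hi]
  · intro a ha b hb hab
    simp only [Set.mem_Iio] at ha hb
    by_contra hne
    rcases lt_trichotomy a b with h | h | h
    · by_cases hbm : b < m
      · have ham : a < m := h.trans hbm
        have hxa : Y t a = x a := by
          simp only [hYdef]; rw [if_neg (by omega), hy0old a ham]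
        have hxb : Y t b = x b := by
          simp only [hYdef]; rw [if_neg (by omega), hy0old b hbm]
        exact hne (hinj (Set.mem_Iio.mpr ham) (Set.mem_Iio.mpr hbm) (by rw [← hxa, ← hxb, hab]))
      · exact absurd hab (ne_of_lt (hord a b h hb (Nat.le_of_not_lt hbm)))
    · exact hne h
    · by_cases ham : a < m
      · have hbm : b < m := h.trans ham
        have hxa : Y t a = x a := by
          simp only [hYdef]; rw [if_neg (by omega), hy0old a ham]
        have hxb : Y t b = x b := by
          simp only [hYdef]; rw [if_neg (by omega), hy0old b hbm]
        exact hne (hinj (Set.mem_Iio.mpr ham) (Set.mem_Iio.mpr hbm) (by rw [← hxa, ← hxb, hab]))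
      · exact absurd hab.symm (ne_of_lt (hord b a h ha (Nat.le_of_not_lt ham)))
  · rw [hYE t htpos, htval]

lemma Epow_eq_erase (s : ℝ) (hs : 0 < s) (n : ℕ) (x : ℕ → ℝ) :
    Epow s n x = ∑ i ∈ Finset.range n, ∑ j ∈ (Finset.range n).erase i, |x i - x j| ^ (-s) := by
  unfold Epow
  refine Finset.sum_congr rfl fun i hi => ?_
  rw [Finset.sum_erase (f := fun j => |x i - x j| ^ (-s)) _ (by
    simp [Real.zero_rpow (by simpa using hs.ne' : -s ≠ 0)])]

lemma Epow_congr (s : ℝ) (n : ℕ) (x y : ℕ → ℝ) (h : ∀ i < n, x i = y i) :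
    Epow s n x = Epow s n y := by
  unfold Epow
  refine Finset.sum_congr rfl fun i hi => Finset.sum_congr rfl fun j hj => ?_
  rw [h i (Finset.mem_range.mp hi), h j (Finset.mem_range.mp hj)]

open scoped Classical in
noncomputable def extend (s e : ℝ) (p : (ℕ → ℝ) × ℕ) : (ℕ → ℝ) × ℕ :=
  if h : 0 < s ∧ 0 < e ∧ Set.InjOn p.1 (Set.Iio p.2) then
    ⟨(exists_extension s h.1 e h.2.1 p.1 p.2 h.2.2).choose,
     (exists_extension s h.1 e h.2.1 p.1 p.2 h.2.2).choose_spec.choose⟩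
  else p

lemma extend_spec (s e : ℝ) (hs : 0 < s) (he : 0 < e) (p : (ℕ → ℝ) × ℕ)
    (hp : Set.InjOn p.1 (Set.Iio p.2)) :
    p.2 < (extend s e p).2 ∧ 2 ≤ (extend s e p).2 ∧
    (∀ i < p.2, (extend s e p).1 i = p.1 i) ∧
    Set.InjOn (extend s e p).1 (Set.Iio (extend s e p).2) ∧
    Epow s (extend s e p).2 (extend s e p).1
      = e * (((extend s e p).2 : ℝ) * (((extend s e p).2 : ℝ) - 1)) := by
  have h : 0 < s ∧ 0 < e ∧ Set.InjOn p.1 (Set.Iio p.2) := ⟨hs, he, hp⟩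
  simp only [extend, dif_pos h]
  have hspec := (exists_extension s h.1 e h.2.1 p.1 p.2 h.2.2).choose_spec.choose_spec
  exact ⟨hspec.1, hspec.2.1, hspec.2.2.1, hspec.2.2.2.1, hspec.2.2.2.2⟩

noncomputable def seqF (s : ℝ) (e : ℕ → ℝ) : ℕ → (ℕ → ℝ) × ℕ
  | 0 => extend s (e 0) (fun _ => 0, 0)
  | k+1 => extend s (e (k+1)) (seqF s e k)

theorem exists_seq_prescribed (s : ℝ) (hs : 0 < s) (e : ℕ → ℝ) (he : ∀ k, 0 < e k) :
    ∃ u : ℕ → ℝ, Function.Injective u ∧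
      ∃ nk : ℕ → ℕ, StrictMono nk ∧ (∀ k, 2 ≤ nk k) ∧
        ∀ k, Epow s (nk k) u = e k * ((nk k : ℝ) * ((nk k : ℝ) - 1)) := by
  classical
  have hinv : ∀ k, Set.InjOn (seqF s e k).1 (Set.Iio (seqF s e k).2) ∧
      2 ≤ (seqF s e k).2 ∧
      Epow s (seqF s e k).2 (seqF s e k).1
        = e k * (((seqF s e k).2 : ℝ) * (((seqF s e k).2 : ℝ) - 1)) := by
    intro k
    induction k with
    | zero =>
      have h0 : Set.InjOn (fun _ : ℕ => (0:ℝ)) (Set.Iio (0:ℕ)) := by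
        intro a ha; simp at ha
      have := extend_spec s (e 0) hs (he 0) (fun _ => 0, 0) h0
      exact ⟨this.2.2.2.1, this.2.1, this.2.2.2.2⟩
    | succ k ih =>
      have := extend_spec s (e (k+1)) hs (he (k+1)) (seqF s e k) ih.1
      exact ⟨this.2.2.2.1, this.2.1, this.2.2.2.2⟩
  have hstep : ∀ k, (seqF s e k).2 < (seqF s e (k+1)).2 ∧
      ∀ i < (seqF s e k).2, (seqF s e (k+1)).1 i = (seqF s e k).1 i := by
    intro k
    have := extend_spec s (e (k+1)) hs (he (k+1)) (seqF s e k) (hinv k).1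
    exact ⟨this.1, this.2.2.1⟩
  have hmono : StrictMono (fun k => (seqF s e k).2) := strictMono_nat_of_lt_succ fun k => (hstep k).1
  have hle : ∀ k l, k ≤ l → (seqF s e k).2 ≤ (seqF s e l).2 := fun k l h => hmono.monotone h
  have hge : ∀ k, k + 2 ≤ (seqF s e k).2 := by
    intro k
    induction k with
    | zero => exact (hinv 0).2.1
    | succ k ih => have := (hstep k).1; omega
  have hagree : ∀ k l, k ≤ l → ∀ i < (seqF s e k).2, (seqF s e l).1 i = (seqF s e k).1 i := by
    intro k l hkl
    induction l, hkl using Nat.le_induction with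
    | base => intro i _; rfl
    | succ l hkl ih =>
      intro i hi
      rw [(hstep l).2 i (lt_of_lt_of_le hi (hle k l hkl)), ih i hi]
  have hu : ∀ k, ∀ i, i < (seqF s e k).2 → (seqF s e i).1 i = (seqF s e k).1 i := by
    intro k i hi
    rcases le_total k i with hki | hik
    · exact hagree k i hki i hi
    · exact (hagree i k hik i (lt_of_lt_of_le (by omega) (hge i))).symm
  refine ⟨fun i => (seqF s e i).1 i, ?_, fun k => (seqF s e k).2, hmono,
    fun k => (hinv k).2.1, ?_⟩
  · intro a b hab
    simp only at hab
    have ha : a < (seqF s e (max a b)).2 :=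
      lt_of_lt_of_le (by omega : a < max a b + 2) (hge (max a b))
    have hb : b < (seqF s e (max a b)).2 :=
      lt_of_lt_of_le (by omega : b < max a b + 2) (hge (max a b))
    exact (hinv (max a b)).1 (Set.mem_Iio.mpr ha) (Set.mem_Iio.mpr hb)
      (by rw [← hu (max a b) a ha, ← hu (max a b) b hb]; exact hab)
  · intro k
    rw [Epow_congr s _ (fun i => (seqF s e i).1 i) (seqF s e k).1 (fun i hi => hu k i hi)]
    exact (hinv k).2.2



/-- For every `s ∈ (0, d]` and every sequence of positive reals `{e_k}`, there is a sequence
of distinct points in `ℝ^d` generating `P_n = {x_1,...,x_n}` and an increasing sequence of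
indices `{n_k}` with `J_s(P_{n_k}) = e_k` for all `k`. -/
theorem exists_points_with_prescribed_energies
    (d : ℕ) (s : ℝ) (hs0 : 0 < s) (hsd : s ≤ d) (e : ℕ → ℝ) (he : ∀ k, 0 < e k) :
    ∃ x : ℕ → EuclideanSpace ℝ (Fin d), Function.Injective x ∧
      ∃ nk : ℕ → ℕ, StrictMono nk ∧ (∀ k, 2 ≤ nk k) ∧
        ∀ k, (1 / ((nk k : ℝ) * ((nk k : ℝ) - 1))) *
            ∑ i ∈ Finset.range (nk k), ∑ j ∈ (Finset.range (nk k)).erase i,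
              dist (x i) (x j) ^ (-s) = e k := by
  have hd : 0 < d := by
    by_contra hc
    have : d = 0 := by omega
    subst this
    simp at hsd
    linarith
  obtain ⟨u, huinj, nk, hmono, hnk2, hE⟩ := exists_seq_prescribed s hs0 e he
  set i0 : Fin d := ⟨0, hd⟩ with hi0
  refine ⟨fun i => EuclideanSpace.single i0 (u i), ?_, nk, hmono, hnk2, ?_⟩
  · intro a b hab
    apply huinj
    have := congrArg (fun v : EuclideanSpace ℝ (Fin d) => v i0) hab
    simpa using this
  · intro k
    have hdist : ∀ i j : ℕ, dist (EuclideanSpace.single i0 (u i)) (EuclideanSpace.single i0 (u j))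
        = |u i - u j| := fun i j => by
      rw [EuclideanSpace.dist_single_same, Real.dist_eq]
    have hsum : ∑ i ∈ Finset.range (nk k), ∑ j ∈ (Finset.range (nk k)).erase i,
        dist (EuclideanSpace.single i0 (u i)) (EuclideanSpace.single i0 (u j)) ^ (-s)
        = Epow s (nk k) u := by
      rw [Epow_eq_erase s hs0]
      exact Finset.sum_congr rfl fun i _ => Finset.sum_congr rfl fun j _ => by rw [hdist]
    rw [hsum, hE k]
    have h2 : (2:ℝ) ≤ (nk k : ℝ) := by exact_mod_cast hnk2 k
    have hA : ((nk k : ℝ) * ((nk k : ℝ) - 1)) ≠ 0 :=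
      ne_of_gt (mul_pos (by linarith) (by linarith))
    have hB1 : (nk k : ℝ) - 1 ≠ 0 := ne_of_gt (by linarith)
    field_simp
end
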